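/- Let X be a proper, geodesically complete metric space and Γ a group acting on X properly discontinuously, cocompactly, and by isometries. Then the induced action of Γ on SX given by γ·v = γ∘v is an action by isometries of the metric d(v,w) = sup_{t∈ℝ} e^{−|t|}·d(v(t),w(t)), and this action is properly discontinuous and cocompact. -/

import Mathlib

open scoped Pointwise
open Metric

/-- The space of (unit-speed, bi-infinite) geodesics of `X`: isometric embeddings `ℝ → X`. -/
def GeodSpace (X : Type*) [MetricSpace X] : Type _ := {v : ℝ → X // Isometry v}

/-- The induced action `γ · v = γ ∘ v` of `Γ` on the space of geodesics. -/
def actGeod {X : Type*} [MetricSpace X] {Γ : Type*} [Group Γ] [MulAction Γ X]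
    [IsIsometricSMul Γ X] (γ : Γ) (v : GeodSpace X) : GeodSpace X :=
  ⟨fun t => γ • v.1 t, (isometry_smul X γ).comp v.2⟩

namespace Stmt8Aux

variable {X : Type*} [MetricSpace X]

noncomputable def gdist (v w : GeodSpace X) : ℝ :=
  ⨆ t : ℝ, Real.exp (-|t|) * dist (v.1 t) (w.1 t)

lemma term_nonneg (v w : GeodSpace X) (t : ℝ) :
    0 ≤ Real.exp (-|t|) * dist (v.1 t) (w.1 t) :=
  mul_nonneg (Real.exp_pos _).le dist_nonneg

lemma term_le (v w : GeodSpace X) (t : ℝ) :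
    Real.exp (-|t|) * dist (v.1 t) (w.1 t) ≤ dist (v.1 0) (w.1 0) + 2 := by
  have h1 : dist (v.1 t) (w.1 t) ≤ |t| + dist (v.1 0) (w.1 0) + |t| := by
    have := dist_triangle4 (v.1 t) (v.1 0) (w.1 0) (w.1 t)
    rwa [v.2.dist_eq t 0, w.2.dist_eq 0 t, Real.dist_eq, Real.dist_eq, sub_zero,
      zero_sub, abs_neg] at this
  have hexple : Real.exp (-|t|) ≤ 1 := by
    rw [Real.exp_le_one_iff]; simp [abs_nonneg t]
  have hxe : |t| * Real.exp (-|t|) ≤ 1 := by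
    rw [Real.exp_neg, mul_inv_le_iff₀ (Real.exp_pos _), one_mul]
    linarith [Real.add_one_le_exp |t|]
  calc Real.exp (-|t|) * dist (v.1 t) (w.1 t)
      ≤ Real.exp (-|t|) * (|t| + dist (v.1 0) (w.1 0) + |t|) := by
        exact mul_le_mul_of_nonneg_left h1 (Real.exp_pos _).le
    _ = |t| * Real.exp (-|t|) + Real.exp (-|t|) * dist (v.1 0) (w.1 0)
        + |t| * Real.exp (-|t|) := by ring
    _ ≤ 1 + 1 * dist (v.1 0) (w.1 0) + 1 :=
        add_le_add (add_le_add hxe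
          (mul_le_mul_of_nonneg_right hexple dist_nonneg)) hxe
    _ = dist (v.1 0) (w.1 0) + 2 := by ring

lemma bdd (v w : GeodSpace X) :
    BddAbove (Set.range fun t : ℝ => Real.exp (-|t|) * dist (v.1 t) (w.1 t)) :=
  ⟨dist (v.1 0) (w.1 0) + 2, by rintro _ ⟨t, rfl⟩; exact term_le v w t⟩

lemma gdist_self (v : GeodSpace X) : gdist v v = 0 := by
  have : (fun t : ℝ => Real.exp (-|t|) * dist (v.1 t) (v.1 t)) = fun _ => 0 := by
    funext t; simp
  rw [gdist, this, ciSup_const]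

lemma gdist_comm (v w : GeodSpace X) : gdist v w = gdist w v := by
  unfold gdist; simp_rw [dist_comm]

lemma gdist_triangle (u v w : GeodSpace X) : gdist u w ≤ gdist u v + gdist v w := by
  refine ciSup_le fun t => ?_
  calc Real.exp (-|t|) * dist (u.1 t) (w.1 t)
      ≤ Real.exp (-|t|) * (dist (u.1 t) (v.1 t) + dist (v.1 t) (w.1 t)) :=
        mul_le_mul_of_nonneg_left (dist_triangle _ _ _) (Real.exp_pos _).le
    _ = Real.exp (-|t|) * dist (u.1 t) (v.1 t)
        + Real.exp (-|t|) * dist (v.1 t) (w.1 t) := by ring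
    _ ≤ gdist u v + gdist v w :=
        add_le_add (le_ciSup (bdd u v) t) (le_ciSup (bdd v w) t)

lemma gdist_eq (v w : GeodSpace X) (h : gdist v w = 0) : v = w := by
  refine Subtype.ext (funext fun t => ?_)
  have h1 : Real.exp (-|t|) * dist (v.1 t) (w.1 t) ≤ 0 := h ▸ le_ciSup (bdd v w) t
  have := le_antisymm h1 (term_nonneg v w t)
  rw [mul_eq_zero] at this
  rcases this with h' | h'
  · exact absurd h' (Real.exp_pos _).ne'
  · exact dist_eq_zero.1 h'

noncomputable def gms : MetricSpace (GeodSpace X) where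
  dist := gdist
  dist_self := gdist_self
  dist_comm := gdist_comm
  dist_triangle := gdist_triangle
  eq_of_dist_eq_zero := gdist_eq _ _

lemma dist_zero_le (v w : GeodSpace X) : dist (v.1 0) (w.1 0) ≤ gdist v w := by
  have := le_ciSup (bdd v w) 0
  simp only [abs_zero, neg_zero, Real.exp_zero, one_mul] at this
  exact this

end Stmt8Aux

namespace Stmt8Aux

variable {X : Type*} [MetricSpace X] [ProperSpace X]

theorem isCompact_slice (K0 : Set X) (hK0 : IsCompact K0) :
    @IsCompact _ ((gms : MetricSpace (GeodSpace X)).toUniformSpace.toTopologicalSpace)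
      {v : GeodSpace X | v.1 0 ∈ K0} := by
  letI : MetricSpace (GeodSpace X) := gms
  rcases K0.eq_empty_or_nonempty with rfl | ⟨x0, hx0⟩
  · have he : {v : GeodSpace X | v.1 0 ∈ (∅ : Set X)} = ∅ := by simp
    rw [he]
    exact isCompact_empty
  obtain ⟨R, hR⟩ := hK0.isBounded.subset_closedBall x0
  have hR0 : 0 ≤ R := by simpa using hR hx0
  set S : Set (ℝ → X) := {f | Isometry f ∧ f 0 ∈ K0} with hSdef
  have hSsub : S ⊆ Set.pi Set.univ fun t => closedBall x0 (R + |t|) := by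
    intro f hf
    rw [Set.mem_univ_pi]
    intro t
    rw [mem_closedBall]
    have h1 : dist (f t) (f 0) = |t| := by
      rw [hf.1.dist_eq t 0, Real.dist_eq, sub_zero]
    have h2 : dist (f 0) x0 ≤ R := hR hf.2
    calc dist (f t) x0 ≤ dist (f t) (f 0) + dist (f 0) x0 := dist_triangle _ _ _
      _ ≤ |t| + R := by rw [h1]; linarith
      _ = R + |t| := by ring
  have hSclosed : IsClosed S := by
    have : S = (⋂ s : ℝ, ⋂ t : ℝ, {f : ℝ → X | dist (f s) (f t) = dist s t})
        ∩ {f : ℝ → X | f 0 ∈ K0} := by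
      ext f
      simp only [hSdef, Set.mem_setOf_eq, Set.mem_inter_iff, Set.mem_iInter,
        isometry_iff_dist_eq]
    rw [this]
    exact IsClosed.inter
      (isClosed_iInter fun s => isClosed_iInter fun t =>
        isClosed_eq ((continuous_apply s).dist (continuous_apply t)) continuous_const)
      (hK0.isClosed.preimage (continuous_apply 0))
  have hS : IsCompact S :=
    (isCompact_univ_pi fun t => isCompact_closedBall x0 (R + |t|)).of_isClosed_subset
      hSclosed hSsub
  haveI : CompactSpace S := isCompact_iff_compactSpace.mp hS
  set φ : S → GeodSpace X := fun f => ⟨f.1, f.2.1⟩ with hφdef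
  have hrange : {v : GeodSpace X | v.1 0 ∈ K0} = Set.range φ := by
    ext v
    constructor
    · intro hv
      exact ⟨⟨v.1, v.2, hv⟩, rfl⟩
    · rintro ⟨f, rfl⟩
      exact f.2.2
  have hcont : Continuous φ := by
    rw [continuous_iff_continuousAt]
    intro f
    rw [ContinuousAt, Metric.tendsto_nhds]
    intro ε hε
    set δ : ℝ := ε / 6 with hδdef
    have hδ : 0 < δ := by positivity
    -- find T
    have htend : Filter.Tendsto (fun s : ℝ => (2 * R + 2 * s) * Real.exp (-s))
        Filter.atTop (nhds 0) := by
      have h1 := Real.tendsto_exp_neg_atTop_nhds_zero.const_mul (2 * R)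
      have h2 := (Real.tendsto_pow_mul_exp_neg_atTop_nhds_zero 1).const_mul 2
      have h3 := h1.add h2
      rw [mul_zero, mul_zero, add_zero] at h3
      refine h3.congr fun s => ?_
      ring
    obtain ⟨T0, hT0⟩ := Filter.eventually_atTop.mp
      (htend.eventually (gt_mem_nhds (by positivity : (0:ℝ) < ε / 2)))
    set T : ℝ := max T0 0 with hTdef
    set n : ℕ := ⌈T / δ⌉₊ with hndef
    set Gr : Finset ℤ := Finset.Icc (-(n + 1) : ℤ) (n + 1) with hGrdef
    set U : Set S := ⋂ k ∈ Gr, {h : S | dist (h.1 (k * δ)) (f.1 (k * δ)) < δ} with hUdef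
    have hUopen : IsOpen U := by
      refine isOpen_biInter_finset fun k _ => ?_
      have : {h : S | dist (h.1 (k * δ)) (f.1 (k * δ)) < δ}
          = (fun h : S => h.1 (k * δ)) ⁻¹' Metric.ball (f.1 (k * δ)) δ := rfl
      rw [this]
      exact IsOpen.preimage ((continuous_apply _).comp continuous_subtype_val)
        isOpen_ball
    have hfU : f ∈ U := by
      rw [hUdef]
      refine Set.mem_iInter₂.mpr fun k _ => ?_
      simpa using hδ
    filter_upwards [hUopen.mem_nhds hfU] with h hh
    have hmain : gdist (φ h) (φ f) ≤ ε / 2 := by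
      refine ciSup_le fun t => ?_
      show Real.exp (-|t|) * dist (h.1 t) (f.1 t) ≤ ε / 2
      by_cases hcase : |t| ≤ T
      · -- grid argument
        set k : ℤ := ⌊t / δ⌋ with hkdef
        have hk1 : (k : ℝ) ≤ t / δ := Int.floor_le _
        have hk2 : t / δ < (k : ℝ) + 1 := Int.lt_floor_add_one _
        have hkd1 : (k : ℝ) * δ ≤ t := by
          rw [← le_div_iff₀ hδ]; exact hk1
        have hkd2 : t - (k : ℝ) * δ ≤ δ := by
          have : t < ((k : ℝ) + 1) * δ := by
            rw [← div_lt_iff₀ hδ]; exact hk2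
          nlinarith
        have hTn : T / δ ≤ (n : ℝ) := Nat.le_ceil _
        have hkGr : k ∈ Gr := by
          rw [hGrdef, Finset.mem_Icc]
          constructor
          · have hlb : -(T / δ) - 1 ≤ (k : ℝ) := by
              have ht1 : -T ≤ t := neg_le_of_abs_le hcase
              have : -T / δ ≤ t / δ := by gcongr
              rw [neg_div] at this
              linarith
            have : (-(n + 1) : ℝ) ≤ (k : ℝ) := by
              have : -((n : ℝ)) - 1 ≤ (k : ℝ) := by linarith
              linarith
            exact_mod_cast this
          · have hub : (k : ℝ) ≤ T / δ := by
              have ht1 : t ≤ T := le_of_abs_le hcase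
              have : t / δ ≤ T / δ := by gcongr
              linarith
            have : (k : ℝ) ≤ ((n : ℕ) : ℝ) + 1 := by linarith
            exact_mod_cast this
        have hd : dist (h.1 ((k : ℝ) * δ)) (f.1 ((k : ℝ) * δ)) < δ := by
          have := Set.mem_iInter₂.mp hh k hkGr
          exact this
        have hiso_h : dist (h.1 t) (h.1 ((k : ℝ) * δ)) ≤ δ := by
          rw [h.2.1.dist_eq, Real.dist_eq]
          rw [abs_le]
          constructor <;> linarith
        have hiso_f : dist (f.1 ((k : ℝ) * δ)) (f.1 t) ≤ δ := by
          rw [f.2.1.dist_eq, Real.dist_eq]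
          rw [abs_le]
          constructor <;> linarith
        have hdist : dist (h.1 t) (f.1 t) ≤ 3 * δ := by
          calc dist (h.1 t) (f.1 t)
              ≤ dist (h.1 t) (h.1 ((k:ℝ) * δ)) + dist (h.1 ((k:ℝ) * δ)) (f.1 ((k:ℝ) * δ))
                + dist (f.1 ((k:ℝ) * δ)) (f.1 t) := dist_triangle4 _ _ _ _
            _ ≤ 3 * δ := by linarith
        have hexp1 : Real.exp (-|t|) ≤ 1 := by
          rw [Real.exp_le_one_iff]
          simp [abs_nonneg t]
        calc Real.exp (-|t|) * dist (h.1 t) (f.1 t)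
            ≤ 1 * (3 * δ) := by
              exact mul_le_mul hexp1 hdist dist_nonneg zero_le_one
          _ = ε / 2 := by rw [hδdef]; ring
      · -- tail
        push_neg at hcase
        have hT0le : T0 ≤ |t| := (le_max_left _ _).trans hcase.le
        have htail := hT0 |t| hT0le
        have hd0 : dist (h.1 0) (f.1 0) ≤ 2 * R := by
          have h1 : dist (h.1 0) x0 ≤ R := by simpa using hR h.2.2
          have h2 : dist (f.1 0) x0 ≤ R := by simpa using hR f.2.2
          calc dist (h.1 0) (f.1 0) ≤ dist (h.1 0) x0 + dist x0 (f.1 0) :=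
              dist_triangle _ _ _
            _ ≤ 2 * R := by rw [dist_comm x0]; linarith
        have hdt : dist (h.1 t) (f.1 t) ≤ 2 * R + 2 * |t| := by
          have hht : dist (h.1 t) (h.1 0) = |t| := by
            rw [h.2.1.dist_eq, Real.dist_eq, sub_zero]
          have hft : dist (f.1 0) (f.1 t) = |t| := by
            rw [f.2.1.dist_eq, Real.dist_eq, zero_sub, abs_neg]
          calc dist (h.1 t) (f.1 t)
              ≤ dist (h.1 t) (h.1 0) + dist (h.1 0) (f.1 0) + dist (f.1 0) (f.1 t) :=
                dist_triangle4 _ _ _ _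
            _ ≤ 2 * R + 2 * |t| := by rw [hht, hft]; linarith
        calc Real.exp (-|t|) * dist (h.1 t) (f.1 t)
            ≤ Real.exp (-|t|) * (2 * R + 2 * |t|) :=
              mul_le_mul_of_nonneg_left hdt (Real.exp_pos _).le
          _ = (2 * R + 2 * |t|) * Real.exp (-|t|) := by ring
          _ ≤ ε / 2 := htail.le
    calc dist (φ h) (φ f) = gdist (φ h) (φ f) := rfl
      _ ≤ ε / 2 := hmain
      _ < ε := by linarith
  rw [hrange]
  exact isCompact_range hcont

end Stmt8Aux


open Stmt8Aux in
theorem stmt8 {X : Type*} [MetricSpace X] [ProperSpace X]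
    (hgc : ∀ x : X, ∃ v : GeodSpace X, v.1 0 = x)
    {Γ : Type*} [Group Γ] [MulAction Γ X] [IsIsometricSMul Γ X]
    (hpd : ∀ K : Set X, IsCompact K → {γ : Γ | (K ∩ γ • K).Nonempty}.Finite)
    (hcc : ∃ K : Set X, IsCompact K ∧ ∀ x : X, ∃ γ : Γ, γ • x ∈ K) :
    ∃ m : MetricSpace (GeodSpace X),
      (∀ v w : GeodSpace X,
        @dist _ m.toPseudoMetricSpace.toDist v w
          = ⨆ t : ℝ, Real.exp (-|t|) * dist (v.1 t) (w.1 t)) ∧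
      (∀ (γ : Γ) (v w : GeodSpace X),
        @dist _ m.toPseudoMetricSpace.toDist (actGeod γ v) (actGeod γ w)
          = @dist _ m.toPseudoMetricSpace.toDist v w) ∧
      (∀ K : Set (GeodSpace X), @IsCompact _ m.toUniformSpace.toTopologicalSpace K →
        {γ : Γ | (K ∩ (actGeod γ '' K)).Nonempty}.Finite) ∧
      (∃ K : Set (GeodSpace X), @IsCompact _ m.toUniformSpace.toTopologicalSpace K ∧
        ∀ v : GeodSpace X, ∃ γ : Γ, actGeod γ v ∈ K) := by
  classical
  letI m : MetricSpace (GeodSpace X) := gms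
  refine ⟨m, fun v w => rfl, ?_, ?_, ?_⟩
  · -- isometric action
    intro γ v w
    show gdist (actGeod γ v) (actGeod γ w) = gdist v w
    unfold gdist
    congr 1
    funext t
    congr 1
    exact (isometry_smul X γ).dist_eq _ _
  · -- proper discontinuity
    intro K hK
    have hlip : LipschitzWith 1 (fun v : GeodSpace X => v.1 0) := by
      apply LipschitzWith.of_dist_le_mul
      intro v w
      rw [NNReal.coe_one, one_mul]
      exact dist_zero_le v w
    have hK' : IsCompact ((fun v : GeodSpace X => v.1 0) '' K) :=
      hK.image hlip.continuous
    refine (hpd _ hK').subset ?_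
    rintro γ ⟨v, hv1, hv2⟩
    obtain ⟨w, hwK, rfl⟩ := hv2
    refine ⟨(actGeod γ w).1 0, ⟨actGeod γ w, hv1, rfl⟩, ?_⟩
    have heq : (actGeod γ w).1 0 = γ • w.1 0 := rfl
    rw [heq]
    exact Set.smul_mem_smul_set ⟨w, hwK, rfl⟩
  · -- cocompactness
    obtain ⟨K0, hK0c, hK0⟩ := hcc
    refine ⟨{v : GeodSpace X | v.1 0 ∈ K0}, isCompact_slice K0 hK0c, fun v => ?_⟩
    obtain ⟨γ, hγ⟩ := hK0 (v.1 0)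
    exact ⟨γ, hγ⟩
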